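/- For any odd natural number N, the identity Σ''_{j=−(N−1)}^{N−1} i^j e^{−ijz} = (−1)^{(N−1)/2} cos(Nz)/cos(z) holds for all z where cos z ≠ 0, where Σ'' denotes the sum over j = −(N−1), −(N−3), ..., N−3, N−1 (steps of 2). -/

import Mathlib

open Complex Filter MeasureTheory

/-- The digamma function. -/
noncomputable def digamma (z : ℂ) : ℂ := deriv Complex.Gamma z / Complex.Gamma z

/-- Euler–Mascheroni constant `γ = -ψ(1)`. -/
noncomputable def eulerGamma : ℝ := -deriv Real.Gamma 1

/-- The first Stieltjes constant. -/
noncomputable def stieltjes1 : ℝ :=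
  limUnder atTop (fun m : ℕ => (∑ k ∈ Finset.Icc 1 m, Real.log k / k) - (Real.log m) ^ 2 / 2)

/-- The Herglotz function. -/
noncomputable def herglotzF (x : ℂ) : ℂ :=
  ∑' n : ℕ+, (_root_.digamma ((n : ℂ) * x) - Complex.log ((n : ℂ) * x)) / (n : ℂ)

/-- The higher Herglotz function of Vlasenko–Zagier. -/
noncomputable def higherHerglotz (k : ℕ) (x : ℂ) : ℂ :=
  ∑' n : ℕ+, _root_.digamma ((n : ℂ) * x) / (n : ℂ) ^ k

/-- The extended higher Herglotz function. -/
noncomputable def extHerglotz (k N : ℝ) (x : ℂ) : ℂ :=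
  ∑' n : ℕ+, (_root_.digamma ((((n : ℝ) ^ N : ℝ) : ℂ) * x) - Complex.log ((((n : ℝ) ^ N : ℝ) : ℂ) * x))
      / (n : ℂ) ^ (k : ℂ)

/-- The generalized polylogarithm `ₙLi_k(w) = Σ w^{n^N}/n^k`. -/
noncomputable def genLi (k N : ℝ) (w : ℂ) : ℂ :=
  ∑' n : ℕ+, w ^ ((((n : ℝ) ^ N : ℝ)) : ℂ) / (n : ℂ) ^ (k : ℂ)

/-- The polylogarithm `Li_k(z) = Σ zⁿ/n^k`. -/
noncomputable def polylog (k : ℕ) (z : ℂ) : ℂ :=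
  ∑' n : ℕ+, z ^ (n : ℕ) / (n : ℂ) ^ k

/-- The dilogarithm, analytically continued via its integral representation. -/
noncomputable def dilog2 (z : ℂ) : ℂ := -∫ t in (0:ℝ)..1, Complex.log (1 - z * t) / t

lemma cos_ratio_aux (b p : ℂ) (hb : b ≠ 0) (hp : p ≠ 0) (h1 : b ^ 2 + 1 ≠ 0)
    (h3 : b + b⁻¹ ≠ 0) :
    p⁻¹ * ((-p ^ 2 * b ^ 2 - 1) / (-b ^ 2 - 1)) = (b * p + (b * p)⁻¹) / 2 / ((b + b⁻¹) / 2) := by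
  have h2 : (-b ^ 2 - 1 : ℂ) ≠ 0 := by intro h; exact h1 (by linear_combination -h)
  rw [eq_div_iff (div_ne_zero h3 two_ne_zero)]
  field_simp
  ring

theorem cos_ratio_sum (N : ℕ) (hN : Odd N) (z : ℂ) (hz : Complex.cos z ≠ 0) :
    ∑ l ∈ Finset.range N,
        I ^ (2 * (l : ℤ) - ((N : ℤ) - 1)) *
          Complex.exp (-I * (2 * (l : ℤ) - ((N : ℤ) - 1)) * z) =
      (-1 : ℂ) ^ ((N - 1) / 2) * Complex.cos ((N : ℂ) * z) / Complex.cos z := by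
  obtain ⟨m, rfl⟩ := hN
  set a := Complex.exp (-I * z) with ha
  have ha0 : a ≠ 0 := Complex.exp_ne_zero _
  have hainv : Complex.exp (z * I) = a⁻¹ := by
    rw [ha, ← Complex.exp_neg]; ring_nf
  have hcos : Complex.cos z = (a + a⁻¹) / 2 := by
    rw [Complex.cos, hainv, ha]
    ring_nf
  have hsum : a + a⁻¹ ≠ 0 := by
    intro h
    apply hz
    rw [hcos, h, zero_div]
  have hx : (-a^2 : ℂ) ≠ 1 := by
    intro h
    have h2 : a ^ 2 = -1 := by linear_combination -h
    apply hsum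
    field_simp
    linear_combination h2
  have hterm : ∀ l ∈ Finset.range (2*m+1),
      I ^ (2 * (l : ℤ) - ((↑(2*m+1) : ℤ) - 1)) *
        Complex.exp (-I * (2 * (l : ℤ) - ((↑(2*m+1) : ℤ) - 1)) * z)
      = (-1:ℂ)^m * ((a^2)^m)⁻¹ * (-a^2)^l := by
    intro l _
    have hj : (2 * (l : ℤ) - ((↑(2*m+1) : ℤ) - 1)) = ((2*l : ℕ) : ℤ) - ((2*m : ℕ) : ℤ) := by
      push_cast; ring
    have hI : I ^ (2 * (l : ℤ) - ((↑(2*m+1) : ℤ) - 1)) = (-1:ℂ)^l * (-1:ℂ)^m := by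
      rw [hj, zpow_sub₀ I_ne_zero, zpow_natCast, zpow_natCast, pow_mul, pow_mul,
        Complex.I_sq]
      rw [div_eq_mul_inv, ← inv_pow, inv_neg, inv_one]
    have hE : Complex.exp (-I * (2 * (l : ℤ) - ((↑(2*m+1) : ℤ) - 1)) * z)
        = (a^2)^l * ((a^2)^m)⁻¹ := by
      rw [show (-I * (2 * (l : ℤ) - ((↑(2*m+1) : ℤ) - 1)) * z)
          = ((2*l : ℕ) : ℂ) * (-I * z) - ((2*m : ℕ) : ℂ) * (-I * z) by push_cast; ring,
        Complex.exp_sub, Complex.exp_nat_mul, Complex.exp_nat_mul, ← ha, pow_mul, pow_mul,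
        div_eq_mul_inv]
    rw [hI, hE, neg_pow]
    ring
  rw [Finset.sum_congr rfl hterm, ← Finset.mul_sum, geom_sum_eq hx]
  have hm : (2*m+1-1)/2 = m := by omega
  rw [hm]
  have e1 : (-a^2 : ℂ)^(2*m+1) = -((a^2)^m)^2 * a^2 := by
    rw [Odd.neg_pow ⟨m, by ring⟩]; ring
  have e2 : a^(2*m+1) = a * (a^2)^m := by ring
  have hcN : Complex.cos ((↑(2*m+1) : ℂ) * z) = (a^(2*m+1) + (a^(2*m+1))⁻¹) / 2 := by
    rw [Complex.cos, show ((↑(2*m+1) : ℂ) * z * I) = ((2*m+1 : ℕ) : ℂ) * (z * I) by push_cast; ring,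
      show (-(((2*m+1 : ℕ) : ℂ) * z) * I) = ((2*m+1 : ℕ) : ℂ) * (-I * z) by push_cast; ring,
      Complex.exp_nat_mul, Complex.exp_nat_mul, hainv, ← ha, inv_pow]
    ring
  rw [hcN, hcos, e1, e2]
  have hp : ((a^2)^m : ℂ) ≠ 0 := pow_ne_zero _ (pow_ne_zero _ ha0)
  have hx' : (-a^2 - 1 : ℂ) ≠ 0 := by
    intro h; exact hx (by linear_combination h)
  have h21 : (a^2 + 1 : ℂ) ≠ 0 := by
    intro h; exact hx' (by linear_combination -h)
  rw [mul_assoc, mul_div_assoc, cos_ratio_aux a ((a^2)^m) ha0 hp h21 hsum]
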